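/- True count standard deviation formula: Let N ≥ 2 and 1 ≤ n < N. Then the variance of the true count after removing n uniformly random cards satisfies σ_n² = ((N−1)/(N−n)) · n · σ₁²; equivalently σ_n = √((N−1)/(N−n)) · √n · σ₁. -/

import Mathlib

/-- The variance `σ_n²` of the true count of the deck `(α, c)` after removing `n`
uniformly random cards: the deck has `N = Fintype.card α` cards, running count
`R = -∑ a, c a`, true count `T = R/N`, and for a removed subset `S` of size `n`
the new true count is `T_S = -(∑ a ∈ Sᶜ, c a)/(N - n)`; then
`σ_n² = (1 / binom(N,n)) · ∑_{|S| = n} (T_S - T)²`. -/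
noncomputable def trueCountVar {α : Type*} [Fintype α] [DecidableEq α]
    (c : α → ℝ) (n : ℕ) : ℝ :=
  (1 / ((Fintype.card α).choose n : ℝ)) *
    ∑ S ∈ Finset.powersetCard n (Finset.univ : Finset α),
      ((-(∑ a ∈ Finset.univ \ S, c a) / ((Fintype.card α : ℝ) - n))
        - (-(∑ a, c a) / (Fintype.card α : ℝ)))^2

theorem count_subsets {α : Type*} [Fintype α] [DecidableEq α] (T : Finset α) (n : ℕ) (hk : T.card ≤ n) :
    ((Finset.univ.powersetCard n).filter (fun S => T ⊆ S)).card
      = (Fintype.card α - T.card).choose (n - T.card) := by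
  have : (Fintype.card α - T.card).choose (n - T.card)
      = ((Finset.univ \ T).powersetCard (n - T.card)).card := by
    rw [Finset.card_powersetCard, Finset.card_sdiff_of_subset (Finset.subset_univ T), Finset.card_univ]
  rw [this]
  apply Finset.card_nbij' (fun S => S \ T) (fun S => S ∪ T)
  · intro S hS
    simp only [Finset.mem_coe, Finset.mem_filter, Finset.mem_powersetCard] at hS ⊢
    obtain ⟨⟨_, hcard⟩, hTS⟩ := hS
    constructor
    · exact Finset.sdiff_subset_sdiff (Finset.subset_univ _) le_rfl
    · rw [Finset.card_sdiff_of_subset hTS, hcard]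
  · intro S hS
    simp only [Finset.mem_coe, Finset.mem_filter, Finset.mem_powersetCard, Finset.subset_univ, true_and] at hS ⊢
    obtain ⟨hsub, hcard⟩ := hS
    have hdisj : Disjoint S T := Finset.disjoint_of_subset_left hsub Finset.sdiff_disjoint
    refine ⟨?_, Finset.subset_union_right⟩
    rw [Finset.card_union_of_disjoint hdisj, hcard]
    omega
  · intro S hS
    simp only [Finset.mem_coe, Finset.mem_filter, Finset.mem_powersetCard] at hS
    exact Finset.sdiff_union_of_subset hS.2
  · intro S hS
    simp only [Finset.mem_coe, Finset.mem_powersetCard] at hS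
    have hdisj : Disjoint S T := Finset.disjoint_of_subset_left hS.1 Finset.sdiff_disjoint
    beta_reduce
    rw [Finset.union_sdiff_right, Finset.sdiff_eq_self_of_disjoint hdisj]


theorem key_sum {α : Type*} [Fintype α] [DecidableEq α] (d : α → ℝ)
    (hd : ∑ a, d a = 0) (n : ℕ) (hn : 2 ≤ n) :
    ∑ S ∈ Finset.univ.powersetCard n, (∑ a ∈ S, d a)^2
      = (((Fintype.card α - 1).choose (n-1) : ℝ) - ((Fintype.card α - 2).choose (n-2) : ℝ))
          * ∑ a, (d a)^2 := by
  have step1 : ∀ S : Finset α, (∑ a ∈ S, d a)^2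
      = ∑ a, ∑ b, (if a ∈ S ∧ b ∈ S then d a * d b else 0) := by
    intro S
    have h1 : (∑ a ∈ S, d a) = ∑ a, (if a ∈ S then d a else 0) := by
      rw [Finset.sum_ite_mem, Finset.univ_inter]
    rw [sq, h1, Finset.sum_mul_sum]
    refine Finset.sum_congr rfl fun a _ => Finset.sum_congr rfl fun b _ => ?_
    split_ifs with h1 h2 h3 <;> simp_all
  rw [Finset.sum_congr rfl fun S _ => step1 S, Finset.sum_comm]
  have step2 : ∀ a : α, ∑ S ∈ Finset.univ.powersetCard n, ∑ b, (if a ∈ S ∧ b ∈ S then d a * d b else 0)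
      = ∑ b, ∑ S ∈ Finset.univ.powersetCard n, (if a ∈ S ∧ b ∈ S then d a * d b else 0) :=
    fun a => Finset.sum_comm
  rw [Finset.sum_congr rfl fun a _ => step2 a]
  have count1 : ∀ a : α, ((Finset.univ.powersetCard n).filter (fun S => ({a} : Finset α) ⊆ S)).card
      = (Fintype.card α - 1).choose (n-1) := by
    intro a
    have := count_subsets ({a} : Finset α) n (by simp; omega)
    simpa using this
  have count2 : ∀ a b : α, a ≠ b →
      ((Finset.univ.powersetCard n).filter (fun S => ({a, b} : Finset α) ⊆ S)).card
      = (Fintype.card α - 2).choose (n-2) := by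
    intro a b hab
    have := count_subsets ({a, b} : Finset α) n (by rw [Finset.card_insert_of_notMem (by simpa using hab), Finset.card_singleton]; omega)
    rwa [Finset.card_insert_of_notMem (by simpa using hab), Finset.card_singleton] at this
  have inner : ∀ a : α, ∑ b, ∑ S ∈ Finset.univ.powersetCard n, (if a ∈ S ∧ b ∈ S then d a * d b else 0)
      = ((Fintype.card α - 1).choose (n-1) : ℝ) * (d a)^2
        - ((Fintype.card α - 2).choose (n-2) : ℝ) * (d a)^2 := by
    intro a
    have hsplit := Finset.sum_erase_add Finset.univ
      (fun b => ∑ S ∈ Finset.univ.powersetCard n, (if a ∈ S ∧ b ∈ S then d a * d b else 0)) (Finset.mem_univ a)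
    rw [← hsplit]
    have hdiag : ∑ S ∈ Finset.univ.powersetCard n, (if a ∈ S ∧ a ∈ S then d a * d a else 0)
        = ((Fintype.card α - 1).choose (n-1) : ℝ) * (d a)^2 := by
      rw [← Finset.sum_filter]
      have : (Finset.univ.powersetCard n).filter (fun S => a ∈ S ∧ a ∈ S)
          = (Finset.univ.powersetCard n).filter (fun S => ({a} : Finset α) ⊆ S) := by
        apply Finset.filter_congr; intro S _; simp
      rw [Finset.filter_congr (fun S _ => by simp : ∀ S ∈ Finset.univ.powersetCard n, (a ∈ S ∧ a ∈ S) ↔ ({a} : Finset α) ⊆ S)]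
      rw [Finset.sum_const, count1 a, nsmul_eq_mul, sq]
    have hoff : ∀ b ∈ Finset.univ.erase a,
        ∑ S ∈ Finset.univ.powersetCard n, (if a ∈ S ∧ b ∈ S then d a * d b else 0)
        = ((Fintype.card α - 2).choose (n-2) : ℝ) * (d a * d b) := by
      intro b hb
      have hab : a ≠ b := (Finset.ne_of_mem_erase hb).symm
      rw [← Finset.sum_filter]
      rw [Finset.filter_congr (fun S _ => by simp [Finset.insert_subset_iff] : ∀ S ∈ Finset.univ.powersetCard n, (a ∈ S ∧ b ∈ S) ↔ ({a, b} : Finset α) ⊆ S)]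
      rw [Finset.sum_const, count2 a b hab, nsmul_eq_mul]
    rw [Finset.sum_congr rfl hoff]
    have herase : ∑ b ∈ Finset.univ.erase a, d b = - d a := by
      have := Finset.sum_erase_add Finset.univ d (Finset.mem_univ a)
      rw [hd] at this; linarith
    beta_reduce
    rw [hdiag]
    have : ∑ x ∈ Finset.univ.erase a, ((Fintype.card α - 2).choose (n-2) : ℝ) * (d a * d x)
        = ((Fintype.card α - 2).choose (n-2) : ℝ) * (d a * (- d a)) := by
      rw [← Finset.mul_sum, ← Finset.mul_sum, herase]
    rw [this]; ring
  rw [Finset.sum_congr rfl fun a _ => inner a, Finset.sum_sub_distrib,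
    ← Finset.mul_sum, ← Finset.mul_sum]
  ring

theorem var_rewrite {α : Type*} [Fintype α] [DecidableEq α] (c : α → ℝ) (m : ℕ) (hm : m < Fintype.card α) :
    trueCountVar c m = (1 / ((Fintype.card α).choose m : ℝ)) *
      ((∑ S ∈ Finset.univ.powersetCard m,
        (∑ a ∈ S, (c a - (∑ x, c x) / (Fintype.card α : ℝ)))^2) / ((Fintype.card α : ℝ) - m)^2) := by
  have hN0 : (0:ℝ) < (Fintype.card α : ℝ) := by
    have : 0 < Fintype.card α := by omega
    exact_mod_cast this
  have hNm : ((Fintype.card α : ℝ) - m) ≠ 0 := by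
    have : (m:ℝ) < (Fintype.card α : ℝ) := by exact_mod_cast hm
    linarith
  unfold trueCountVar
  rw [Finset.sum_div]
  congr 1
  apply Finset.sum_congr rfl
  intro S hS
  rw [Finset.mem_powersetCard] at hS
  have hcard : S.card = m := hS.2
  have hsd : ∑ a ∈ Finset.univ \ S, c a = (∑ x, c x) - ∑ a ∈ S, c a :=
    Finset.sum_sdiff_eq_sub (Finset.subset_univ S)
  have hds : ∑ a ∈ S, (c a - (∑ x, c x) / (Fintype.card α : ℝ))
      = (∑ a ∈ S, c a) - m * ((∑ x, c x) / (Fintype.card α : ℝ)) := by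
    rw [Finset.sum_sub_distrib, Finset.sum_const, hcard, nsmul_eq_mul]
  rw [hsd, hds, ← div_pow]
  congr 1
  field_simp
  ring

/-- **True count standard deviation formula.** For a deck of `N ≥ 2` cards and
`1 ≤ n < N`, the variance of the true count after removing `n` uniformly random
cards satisfies `σ_n² = ((N-1)/(N-n)) · n · σ₁²`. -/
theorem true_count_sd_formula {α : Type*} [Fintype α] [DecidableEq α]
    (c : α → ℝ) (n : ℕ) (hN : 2 ≤ Fintype.card α)
    (hn : 1 ≤ n) (hnN : n < Fintype.card α) :
    trueCountVar c n
      = (((Fintype.card α : ℝ) - 1) / ((Fintype.card α : ℝ) - n)) * n *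
          trueCountVar c 1 := by
  set N := Fintype.card α with hNdef
  have hN1r : ((N:ℝ) - 1) ≠ 0 := by
    have : (2:ℝ) ≤ (N:ℝ) := by exact_mod_cast hN
    linarith
  by_cases hn1 : n = 1
  · subst hn1
    push_cast
    rw [div_self hN1r]
    ring
  have hn2 : 2 ≤ n := by omega
  have hNr : (N:ℝ) ≠ 0 := by
    have : (2:ℝ) ≤ (N:ℝ) := by exact_mod_cast hN
    linarith
  set d : α → ℝ := fun a => c a - (∑ x, c x) / (N:ℝ) with hddef
  have hd : ∑ a, d a = 0 := by
    simp only [hddef, Finset.sum_sub_distrib, Finset.sum_const, Finset.card_univ, nsmul_eq_mul]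
    field_simp
    rw [← hNdef]; ring
  set Q : ℝ := ∑ a, (d a)^2 with hQdef
  have hone : trueCountVar c 1 = (1 / (N:ℝ)) * (Q / ((N:ℝ) - 1)^2) := by
    rw [var_rewrite c 1 (by omega)]
    have hsum : ∑ S ∈ Finset.univ.powersetCard 1,
        (∑ a ∈ S, (c a - (∑ x, c x) / ((Fintype.card α : ℝ))))^2 = Q := by
      rw [Finset.powersetCard_one, Finset.sum_map]
      simp [hQdef, hddef]
      rw [← hNdef]
    rw [hsum]
    norm_num
    rw [← hNdef]
  have hnn : trueCountVar c n = (1 / ((N.choose n : ℕ) : ℝ)) *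
      ((((N - 1).choose (n-1) : ℝ) - ((N - 2).choose (n-2) : ℝ)) * Q / ((N:ℝ) - n)^2) := by
    rw [var_rewrite c n hnN]
    rw [show (∑ S ∈ Finset.univ.powersetCard n,
        (∑ a ∈ S, (c a - (∑ x, c x) / ((Fintype.card α : ℝ))))^2)
        = ∑ S ∈ Finset.univ.powersetCard n, (∑ a ∈ S, d a)^2 from rfl]
    rw [key_sum d hd n hn2]
  rw [hone, hnn]
  -- nat combinatorial identities
  have h1n : N * (N-1).choose (n-1) = N.choose n * n := by
    have := Nat.add_one_mul_choose_eq (N-1) (n-1)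
    simpa only [Nat.succ_eq_add_one, show N-1+1 = N by omega, show n-1+1 = n by omega] using this
  have h2n : (N-1).choose (n-1) = (N-2).choose (n-2) + (N-2).choose (n-1) := by
    have := Nat.choose_succ_succ (N-2) (n-2)
    simpa only [Nat.succ_eq_add_one, show N-2+1 = N-1 by omega, show n-2+1 = n-1 by omega] using this
  have h3n : (N-1) * (N-2).choose (n-1) = (N-1).choose (n-1) * (N - n) := by
    have a1 := Nat.add_one_mul_choose_eq (N-2) (n-1)
    have a2 := Nat.choose_succ_right_eq (N-1) (n-1)
    simp only [Nat.succ_eq_add_one, show N-2+1 = N-1 by omega, show n-1+1 = n by omega] at a1 a2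
    rw [a1, a2, show N-1-(n-1) = N-n by omega]
  -- cast to ℝ
  have h1 : (N:ℝ) * ((N-1).choose (n-1) : ℝ) = (N.choose n : ℝ) * n := by exact_mod_cast h1n
  have h2 : ((N-1).choose (n-1) : ℝ) = ((N-2).choose (n-2) : ℝ) + ((N-2).choose (n-1) : ℝ) := by
    exact_mod_cast h2n
  have h3 : ((N:ℝ) - 1) * ((N-2).choose (n-1) : ℝ) = ((N-1).choose (n-1) : ℝ) * ((N:ℝ) - n) := by
    have := h3n
    have hc : ((N - n : ℕ) : ℝ) = (N:ℝ) - n := by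
      rw [Nat.cast_sub hnN.le]
    have hc1 : ((N - 1 : ℕ) : ℝ) = (N:ℝ) - 1 := by
      rw [Nat.cast_sub (by omega)]; norm_num
    calc ((N:ℝ) - 1) * ((N-2).choose (n-1) : ℝ)
        = ((N - 1 : ℕ) : ℝ) * ((N-2).choose (n-1) : ℝ) := by rw [hc1]
      _ = (((N-1) * (N-2).choose (n-1) : ℕ) : ℝ) := by push_cast; ring
      _ = (((N-1).choose (n-1) * (N - n) : ℕ) : ℝ) := by rw [h3n]
      _ = ((N-1).choose (n-1) : ℝ) * ((N:ℝ) - n) := by push_cast [Nat.cast_sub hnN.le]; ring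
  have hX : ((N:ℝ) - n) ≠ 0 := by
    have : (n:ℝ) < (N:ℝ) := by exact_mod_cast hnN
    linarith
  have hC0 : ((N.choose n : ℕ) : ℝ) ≠ 0 := by
    have := Nat.choose_pos hnN.le
    positivity
  rw [h2]
  have hD : ((N-2).choose (n-1) : ℝ) = (N.choose n : ℝ) * n * ((N:ℝ) - n) / ((N:ℝ) * ((N:ℝ) - 1)) := by
    rw [eq_div_iff (mul_ne_zero hNr hN1r)]
    linear_combination (N:ℝ) * h3 + ((N:ℝ)-(n:ℝ)) * h1
  rw [add_sub_cancel_left, hD]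
  field_simp
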